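/- Let n ≥ 2, d ≥ 2, N = 2^d − 1, and for real λ set t = 1 − Nλ. Define R_{n,d}(λ) = 1 + (λ−1)·U_{n-1}(t)^2 + (t+λ+1)·U_{n-1}(t)·U_{n-2}(t) − t·U_{n-2}(t)^2 and S_{n,d}(λ) = T_n(t) + N·T_{n-1}(t). Then for all real λ, N·R_{n,d}(λ) − 2^d = S_{n,d}(λ)·(U_{n-2}(t) − U_{n-1}(t)). -/

import Mathlib

noncomputable def Uv (k : ℤ) (t : ℝ) : ℝ := (Polynomial.Chebyshev.U ℝ k).eval t
noncomputable def Tv (k : ℤ) (t : ℝ) : ℝ := (Polynomial.Chebyshev.T ℝ k).eval t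

open Polynomial Polynomial.Chebyshev in
lemma Uv_rec (k : ℤ) (t : ℝ) : Uv k t = 2 * t * Uv (k - 1) t - Uv (k - 2) t := by
  unfold Uv; rw [U_eq]; simp

open Polynomial Polynomial.Chebyshev in
lemma Tv_eq_Uv (k : ℤ) (t : ℝ) : Tv k t = Uv k t - t * Uv (k - 1) t := by
  unfold Tv Uv; rw [T_eq_U_sub_X_mul_U]; simp

open Polynomial Polynomial.Chebyshev in
lemma Uv_pell (k : ℤ) (t : ℝ) :
    Uv k t ^ 2 - 2 * t * Uv k t * Uv (k - 1) t + Uv (k - 1) t ^ 2 = 1 := by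
  induction k using Int.induction_on with
  | zero => simp [Uv, U_zero, U_neg_one]
  | succ i ih =>
    have hU := Uv_rec ((i : ℤ) + 1) t
    have h1 : ((i : ℤ) + 1 - 1) = (i : ℤ) := by ring
    have h2 : ((i : ℤ) + 1 - 2) = (i : ℤ) - 1 := by ring
    rw [h1, h2] at hU
    rw [h1]
    linear_combination ih + (Uv ((i : ℤ) + 1) t - Uv ((i : ℤ) - 1) t) * hU
  | pred i ih =>
    have hU := Uv_rec (-(i : ℤ)) t
    have h1 : (-(i : ℤ) - 1 - 1) = (-(i : ℤ) - 2) := by ring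
    rw [h1]
    linear_combination ih + (Uv (-(i : ℤ) - 2) t - Uv (-(i : ℤ)) t) * hU

theorem stmt_8 (n d : ℕ) (hn : 2 ≤ n) (hd : 2 ≤ d) (lam : ℝ) :
    (fun N t => N * (1 + (lam - 1) * Uv ((n : ℤ) - 1) t ^ 2
        + (t + lam + 1) * Uv ((n : ℤ) - 1) t * Uv ((n : ℤ) - 2) t
        - t * Uv ((n : ℤ) - 2) t ^ 2) - 2 ^ d
      = (Tv (n : ℤ) t + N * Tv ((n : ℤ) - 1) t) * (Uv ((n : ℤ) - 2) t - Uv ((n : ℤ) - 1) t))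
      ((2 : ℝ) ^ d - 1) (1 - ((2 : ℝ) ^ d - 1) * lam) := by
  simp only []
  set N : ℝ := (2 : ℝ) ^ d - 1 with hN
  set t : ℝ := 1 - N * lam with ht
  have hTn : Tv (n : ℤ) t = Uv (n : ℤ) t - t * Uv ((n : ℤ) - 1) t := Tv_eq_Uv _ _
  have hTn1 : Tv ((n : ℤ) - 1) t = Uv ((n : ℤ) - 1) t - t * Uv ((n : ℤ) - 2) t := by
    have := Tv_eq_Uv ((n : ℤ) - 1) t
    rwa [show ((n : ℤ) - 1 - 1) = (n : ℤ) - 2 by ring] at this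
  have hUn : Uv (n : ℤ) t = 2 * t * Uv ((n : ℤ) - 1) t - Uv ((n : ℤ) - 2) t := Uv_rec _ _
  have hpell : Uv ((n : ℤ) - 1) t ^ 2 - 2 * t * Uv ((n : ℤ) - 1) t * Uv ((n : ℤ) - 2) t
      + Uv ((n : ℤ) - 2) t ^ 2 = 1 := by
    have := Uv_pell ((n : ℤ) - 1) t
    rwa [show ((n : ℤ) - 1 - 1) = (n : ℤ) - 2 by ring] at this
  have h2d : (2 : ℝ) ^ d = N + 1 := by rw [hN]; ring
  rw [hTn, hTn1, hUn, h2d, ht]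
  linear_combination hpell
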